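/- Let X be uniformly distributed on the open unit disc, r ∈ (0,1), and Y = r - Re(1/(r-X)). Then Y has mean zero, and there is an absolute constant C₁ such that for all m ≥ 2, |E[Y · 1_{|Y| ≤ m}]| ≤ C₁/m. -/

import Mathlib

open Real Complex MeasureTheory Set Metric

/-- Integrability transfer to polar coordinates. -/
lemma polar_integrable_iff {E : Type*} [NormedAddCommGroup E] [NormedSpace ℝ E] (f : ℂ → E) :
    Integrable f volume ↔
      IntegrableOn (fun p : ℝ × ℝ => p.1 • f (Complex.polarCoord.symm p))
        polarCoord.target volume := by
  set B : ℝ × ℝ → ℝ × ℝ →L[ℝ] ℝ × ℝ := fun p =>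
    LinearMap.toContinuousLinearMap (Matrix.toLin (Module.Basis.finTwoProd ℝ) (Module.Basis.finTwoProd ℝ)
      !![Real.cos p.2, -p.1 * Real.sin p.2; Real.sin p.2, p.1 * Real.cos p.2])
  have A : ∀ p ∈ polarCoord.target, HasFDerivWithinAt polarCoord.symm (B p) polarCoord.target p :=
    fun p _ => (hasFDerivAt_polarCoord_symm p).hasFDerivWithinAt
  have B_det : ∀ p, (B p).det = p.1 := by
    intro p
    conv_rhs => rw [← one_mul p.1, ← Real.cos_sq_add_sin_sq p.2]
    simp only [B, neg_mul, LinearMap.det_toContinuousLinearMap, LinearMap.det_toLin,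
      Matrix.det_fin_two_of, sub_neg_eq_add]
    ring
  set F : ℝ × ℝ → E := f ∘ Complex.measurableEquivRealProd.symm with hF
  have key : IntegrableOn F (polarCoord.symm '' polarCoord.target) volume ↔
      IntegrableOn (fun p => |(B p).det| • F (polarCoord.symm p)) polarCoord.target volume :=
    integrableOn_image_iff_integrableOn_abs_det_fderiv_smul volume
      polarCoord.open_target.measurableSet A polarCoord.symm.injOn F
  have himg : polarCoord.symm '' polarCoord.target = polarCoord.source := by
    rw [← polarCoord.symm_source, polarCoord.symm.image_source_eq_target,
      polarCoord.symm_target]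
  have hsrc : IntegrableOn F polarCoord.source volume ↔ Integrable F volume := by
    rw [IntegrableOn, Measure.restrict_congr_set polarCoord_source_ae_eq_univ,
      Measure.restrict_univ]
  have hFf : Integrable F volume ↔ Integrable f volume :=
    (Complex.volume_preserving_equiv_real_prod.symm).integrable_comp_emb
      (MeasurableEquiv.measurableEmbedding _)
  have hcomp : ∀ p, F (polarCoord.symm p) = f (Complex.polarCoord.symm p) := fun p => rfl
  rw [← hFf, ← hsrc, ← himg, key]
  constructor
  · intro h
    refine (h.congr_fun (fun p hp => ?_) polarCoord.open_target.measurableSet)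
    beta_reduce
    rw [B_det, hcomp, abs_of_pos hp.1]
  · intro h
    refine (h.congr_fun (fun p hp => ?_) polarCoord.open_target.measurableSet)
    beta_reduce
    rw [B_det, hcomp, abs_of_pos hp.1]
open Real Complex MeasureTheory Set Metric

lemma circle_avg {r ρ : ℝ} (hr0 : 0 < r) (hρ0 : 0 < ρ) (hne : ρ ≠ r) :
    ∫ θ in Set.Ioo (-π) π, ((r : ℂ) - Complex.polarCoord.symm (ρ, θ))⁻¹ =
      if ρ < r then 2 * (π : ℂ) / r else 0 := by
  have hsym : ∀ θ : ℝ, Complex.polarCoord.symm (ρ, θ) = circleMap 0 ρ θ := by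
    intro θ
    rw [Complex.polarCoord_symm_apply]
    simp only [circleMap, zero_add, Complex.exp_mul_I]
    push_cast
    ring
  have hne' : ∀ θ : ℝ, (r : ℂ) - circleMap 0 ρ θ ≠ 0 := by
    intro θ h
    apply hne
    have : ‖((r : ℂ))‖ = ‖circleMap 0 ρ θ‖ := by
      rw [sub_eq_zero] at h; rw [h]
    simpa [norm_circleMap_zero, abs_of_pos hρ0, abs_of_pos hr0] using this.symm
  have hcont : Continuous fun θ : ℝ => ((r : ℂ) - circleMap 0 ρ θ)⁻¹ := by
    apply Continuous.inv₀
    · exact continuous_const.sub (continuous_circleMap 0 ρ)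
    · exact hne'
  -- reduce Ioo integral to interval integral over [0, 2π]
  have h1 : ∫ θ in Set.Ioo (-π) π, ((r : ℂ) - Complex.polarCoord.symm (ρ, θ))⁻¹ =
      ∫ θ in (0 : ℝ)..2 * π, ((r : ℂ) - circleMap 0 ρ θ)⁻¹ := by
    simp_rw [hsym]
    rw [← MeasureTheory.integral_Ioc_eq_integral_Ioo,
      ← intervalIntegral.integral_of_le (by linarith [Real.pi_pos] : -π ≤ π)]
    have hper : Function.Periodic (fun θ : ℝ => ((r : ℂ) - circleMap 0 ρ θ)⁻¹) (2 * π) := by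
      intro θ; simp [periodic_circleMap 0 ρ θ]
    have := hper.intervalIntegral_add_eq (-π) 0
    rw [show (-π) + 2 * π = π by ring] at this
    simpa using this
  rw [h1]
  -- relate to circle integral of z⁻¹ * (r - z)⁻¹
  have hkey : (∮ z in C(0, ρ), z⁻¹ * ((r : ℂ) - z)⁻¹) =
      Complex.I * ∫ θ in (0 : ℝ)..2 * π, ((r : ℂ) - circleMap 0 ρ θ)⁻¹ := by
    rw [circleIntegral, ← intervalIntegral.integral_const_mul]
    refine intervalIntegral.integral_congr fun θ _ => ?_
    have h0 : circleMap 0 ρ θ ≠ 0 := circleMap_ne_center hρ0.ne'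
    rw [deriv_circleMap, smul_eq_mul, mul_comm (circleMap 0 ρ θ) Complex.I, mul_assoc,
      ← mul_assoc (circleMap 0 ρ θ), mul_inv_cancel₀ h0, one_mul]
  have hI1 : (∮ z in C(0, ρ), z⁻¹) = 2 * ↑π * Complex.I := by
    have := circleIntegral.integral_sub_inv_of_mem_ball (Metric.mem_ball_self hρ0 (x := (0:ℂ)))
    simpa using this
  have hci1 : CircleIntegrable (fun z : ℂ => (r : ℂ)⁻¹ * z⁻¹) 0 ρ := by
    apply ContinuousOn.circleIntegrable hρ0.le
    apply ContinuousOn.mul continuousOn_const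
    apply ContinuousOn.inv₀ continuousOn_id
    intro z hz h0
    simp only [id_eq] at h0
    rw [mem_sphere_iff_norm, h0] at hz
    simp at hz; exact hρ0.ne hz
  have hrsphere : ∀ z ∈ Metric.sphere (0:ℂ) ρ, z ≠ (r : ℂ) := by
    intro z hz h
    rw [mem_sphere_iff_norm, h] at hz
    apply hne
    simpa [Complex.norm_real, Real.norm_eq_abs, abs_of_pos hr0] using hz.symm
  have hci2 : CircleIntegrable (fun z : ℂ => (r : ℂ)⁻¹ * (z - (r:ℂ))⁻¹) 0 ρ := by
    apply ContinuousOn.circleIntegrable hρ0.le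
    apply ContinuousOn.mul continuousOn_const
    apply ContinuousOn.inv₀ (continuousOn_id.sub continuousOn_const)
    intro z hz
    exact sub_ne_zero.mpr (hrsphere z hz)
  have hsplit : (∮ z in C(0, ρ), z⁻¹ * ((r : ℂ) - z)⁻¹) =
      (r : ℂ)⁻¹ * (2 * ↑π * Complex.I) - (r:ℂ)⁻¹ * (∮ z in C(0, ρ), (z - (r:ℂ))⁻¹) := by
    have hcongr : (∮ z in C(0, ρ), z⁻¹ * ((r : ℂ) - z)⁻¹) =
        ∮ z in C(0, ρ), ((r : ℂ)⁻¹ * z⁻¹ - (r : ℂ)⁻¹ * (z - (r:ℂ))⁻¹) := by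
      refine circleIntegral.integral_congr hρ0.le fun z hz => ?_
      have hz0 : z ≠ 0 := by
        intro h0
        rw [mem_sphere_iff_norm, h0] at hz
        simp at hz; exact hρ0.ne hz
      have hzr : z ≠ (r : ℂ) := hrsphere z hz
      have hr' : (r : ℂ) ≠ 0 := by
        simpa using hr0.ne'
      have hd1 : (r : ℂ) - z ≠ 0 := sub_ne_zero.mpr fun h => hzr h.symm
      have hd2 : z - (r : ℂ) ≠ 0 := sub_ne_zero.mpr hzr
      field_simp
      ring
    rw [hcongr, circleIntegral.integral_sub hci1 hci2, circleIntegral.integral_const_mul,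
      circleIntegral.integral_const_mul, hI1]
  rcases hne.lt_or_gt with h | h
  · -- ρ < r : second integral vanishes
    have hzero : (∮ z in C(0, ρ), (z - (r:ℂ))⁻¹) = 0 := by
      apply circleIntegral_eq_zero_of_differentiable_on_off_countable hρ0.le countable_empty
      · apply ContinuousOn.inv₀ (continuousOn_id.sub continuousOn_const)
        intro z hz
        refine sub_ne_zero.mpr fun he => ?_
        simp only [id_eq] at he
        rw [he] at hz
        simp [Complex.dist_eq, abs_of_pos hr0] at hz
        linarith
      · intro z hz
        refine DifferentiableAt.inv (differentiableAt_id.sub_const _) ?_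
        refine sub_ne_zero.mpr fun he => ?_
        simp only [diff_empty, Metric.mem_ball] at hz
        rw [he] at hz
        simp [Complex.dist_eq, abs_of_pos hr0] at hz
        linarith
    rw [if_pos h]
    have h2 : Complex.I * (∫ θ in (0:ℝ)..2 * π, ((r : ℂ) - circleMap 0 ρ θ)⁻¹) =
        (r : ℂ)⁻¹ * (2 * ↑π * Complex.I) := by
      rw [← hkey, hsplit, hzero, mul_zero, sub_zero]
    apply mul_left_cancel₀ Complex.I_ne_zero
    rw [h2]
    have hr' : (r : ℂ) ≠ 0 := by simpa using hr0.ne'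
    field_simp
  · -- r < ρ : second integral is 2πI
    have hmem : (r : ℂ) ∈ Metric.ball (0 : ℂ) ρ := by
      rw [Metric.mem_ball]
      simp [Complex.dist_eq, abs_of_pos hr0]
      exact h
    have h2πI := circleIntegral.integral_sub_inv_of_mem_ball hmem
    rw [if_neg (not_lt.mpr h.le)]
    have h2 : Complex.I * (∫ θ in (0:ℝ)..2 * π, ((r : ℂ) - circleMap 0 ρ θ)⁻¹) = 0 := by
      rw [← hkey, hsplit, h2πI, sub_self]
    have := mul_eq_zero.mp h2
    rcases this with h3 | h3
    · exact absurd h3 Complex.I_ne_zero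
    · exact h3

lemma inv_norm_ball_zero (R : ℝ) (hR : 0 < R) :
    IntegrableOn (fun z : ℂ => ‖z‖⁻¹) (Metric.ball 0 R) volume ∧
      ∫ z in Metric.ball (0:ℂ) R, ‖z‖⁻¹ = 2 * π * R := by
  set f : ℂ → ℝ := (Metric.ball (0:ℂ) R).indicator (fun z => ‖z‖⁻¹) with hf
  have hmeasf : Measurable f :=
    (measurable_norm.inv).indicator measurableSet_ball
  -- the polar pullback is an indicator
  have hpull : ∀ p ∈ polarCoord.target,
      p.1 • f (Complex.polarCoord.symm p) = (Set.Iio R ×ˢ (Set.univ : Set ℝ)).indicator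
        (fun _ => (1:ℝ)) p := by
    rintro ⟨ρ, θ⟩ hp
    have hρ : 0 < ρ := hp.1
    have habs : ‖Complex.polarCoord.symm (ρ, θ)‖ = ρ := by
      rw [Complex.norm_polarCoord_symm]; exact abs_of_pos hρ
    by_cases hlt : ρ < R
    · have hmem : Complex.polarCoord.symm (ρ, θ) ∈ Metric.ball (0:ℂ) R := by
        rw [Metric.mem_ball, Complex.dist_eq, sub_zero, habs]; exact hlt
      rw [hf]
      rw [Set.indicator_of_mem hmem, Set.indicator_of_mem (by exact ⟨hlt, trivial⟩)]
      simp only [smul_eq_mul, habs]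
      field_simp
    · have hmem : Complex.polarCoord.symm (ρ, θ) ∉ Metric.ball (0:ℂ) R := by
        rw [Metric.mem_ball, Complex.dist_eq, sub_zero, habs]; exact hlt
      rw [hf]
      rw [Set.indicator_of_notMem hmem, Set.indicator_of_notMem (fun h => hlt h.1)]
      simp
  have htarget : polarCoord.target = Set.Ioi (0:ℝ) ×ˢ Set.Ioo (-π) π := rfl
  have hfin : volume ((Set.Iio R ×ˢ (Set.univ : Set ℝ)) ∩ polarCoord.target) < ⊤ := by
    have hsub : (Set.Iio R ×ˢ (Set.univ : Set ℝ)) ∩ polarCoord.target ⊆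
        Set.Ioo 0 R ×ˢ Set.Ioo (-π) π := by
      rintro ⟨x, y⟩ ⟨⟨hx1, -⟩, hx2, hy⟩
      exact ⟨⟨hx2, hx1⟩, hy⟩
    refine (measure_mono hsub).trans_lt ?_
    rw [Measure.volume_eq_prod ℝ ℝ, Measure.prod_prod, Real.volume_Ioo, Real.volume_Ioo]
    exact ENNReal.mul_lt_top ENNReal.ofReal_lt_top ENNReal.ofReal_lt_top
  have hpint : IntegrableOn ((Set.Iio R ×ˢ (Set.univ : Set ℝ)).indicator
      (fun _ => (1:ℝ))) polarCoord.target volume := by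
    rw [IntegrableOn, integrable_indicator_iff ((measurableSet_Iio).prod MeasurableSet.univ)]
    rw [IntegrableOn, Measure.restrict_restrict ((measurableSet_Iio).prod MeasurableSet.univ)]
    apply (integrableOn_const_iff (C := (1:ℝ))).mpr
    right
    exact hfin
  have hint : Integrable f volume := by
    rw [polar_integrable_iff]
    exact hpint.congr_fun (fun p hp => (hpull p hp).symm) polarCoord.open_target.measurableSet
  constructor
  · rw [hf] at hint
    rwa [integrable_indicator_iff measurableSet_ball] at hint
  · have h1 : ∫ z, f z = ∫ z in Metric.ball (0:ℂ) R, ‖z‖⁻¹ := by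
      rw [hf, MeasureTheory.integral_indicator measurableSet_ball]
    rw [← h1, ← Complex.integral_comp_polarCoord_symm f]
    rw [setIntegral_congr_fun polarCoord.open_target.measurableSet hpull]
    rw [setIntegral_indicator ((measurableSet_Iio).prod MeasurableSet.univ)]
    rw [setIntegral_const]
    have : polarCoord.target ∩ (Set.Iio R ×ˢ (Set.univ : Set ℝ)) =
        Set.Ioo 0 R ×ˢ Set.Ioo (-π) π := by
      rw [htarget]
      ext ⟨x, y⟩
      constructor
      · rintro ⟨⟨hx2, hy⟩, hx1, -⟩; exact ⟨⟨hx2, hx1⟩, hy⟩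
      · rintro ⟨⟨hx1, hx2⟩, hy⟩; exact ⟨⟨hx1, hy⟩, hx2, trivial⟩
    rw [this, Measure.volume_eq_prod ℝ ℝ, measureReal_prod_prod, Real.volume_real_Ioo_of_le hR.le,
      Real.volume_real_Ioo_of_le (by linarith [Real.pi_pos])]
    simp only [smul_eq_mul, mul_one]
    ring


lemma inv_norm_ball (c : ℂ) (R : ℝ) (hR : 0 < R) :
    IntegrableOn (fun z : ℂ => ‖z - c‖⁻¹) (Metric.ball c R) volume ∧
      ∫ z in Metric.ball c R, ‖z - c‖⁻¹ = 2 * π * R := by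
  have hmp : MeasurePreserving (fun z : ℂ => z + c) volume volume :=
    measurePreserving_add_right volume c
  have hemb : MeasurableEmbedding (fun z : ℂ => z + c) :=
    (MeasurableEquiv.addRight c).measurableEmbedding
  have hpre : (fun z : ℂ => z + c) ⁻¹' (Metric.ball c R) = Metric.ball 0 R := by
    ext z
    simp [Metric.mem_ball, dist_eq_norm]
  have hcomp : ∀ z : ℂ, ‖z + c - c‖⁻¹ = ‖z‖⁻¹ := fun z => by rw [add_sub_cancel_right]
  obtain ⟨hint0, hval0⟩ := inv_norm_ball_zero R hR
  constructor
  · have := (hmp.integrableOn_comp_preimage hemb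
      (f := fun z : ℂ => ‖z - c‖⁻¹) (s := Metric.ball c R))
    rw [hpre] at this
    rw [← this]
    exact hint0.congr_fun (fun z _ => (hcomp z).symm) measurableSet_ball
  · have := hmp.setIntegral_preimage_emb hemb (fun z : ℂ => ‖z - c‖⁻¹) (Metric.ball c R)
    rw [hpre] at this
    rw [← this, ← hval0]
    exact setIntegral_congr_fun measurableSet_ball fun z _ => hcomp z

lemma disc_integral (r : ℝ) (hr0 : 0 < r) (hr1 : r < 1) :
    IntegrableOn (fun z : ℂ => ((r : ℂ) - z)⁻¹) (Metric.ball 0 1) volume ∧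
      ∫ z in Metric.ball (0:ℂ) 1, ((r : ℂ) - z)⁻¹ = (π : ℂ) * r := by
  have hrC : (r : ℂ) ≠ 0 := by simpa using hr0.ne'
  have hnorm : ∀ z : ℂ, ‖((r : ℂ) - z)⁻¹‖ = ‖z - (r : ℂ)‖⁻¹ := fun z => by
    rw [norm_inv, norm_sub_rev]
  have hmeasg : Measurable fun z : ℂ => ((r : ℂ) - z)⁻¹ :=
    (measurable_const.sub measurable_id).inv
  have hsub : Metric.ball (0:ℂ) 1 ⊆ Metric.ball (r : ℂ) 2 := by
    intro z hz
    rw [Metric.mem_ball] at hz ⊢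
    calc dist z (r:ℂ) ≤ dist z 0 + dist (0:ℂ) (r:ℂ) := dist_triangle _ _ _
    _ < 1 + 1 := by
        apply add_lt_add hz
        simpa [Complex.dist_eq, abs_of_pos hr0] using hr1
    _ = 2 := by norm_num
  have hInt : IntegrableOn (fun z : ℂ => ((r : ℂ) - z)⁻¹) (Metric.ball 0 1) volume := by
    refine Integrable.mono' (((inv_norm_ball (r:ℂ) 2 two_pos).1).mono_set hsub)
      hmeasg.aestronglyMeasurable ?_
    exact Filter.Eventually.of_forall fun z => le_of_eq (hnorm z)
  refine ⟨hInt, ?_⟩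
  set f : ℂ → ℂ := (Metric.ball (0:ℂ) 1).indicator (fun z => ((r : ℂ) - z)⁻¹) with hf
  have hint : Integrable f volume := by
    rw [hf, integrable_indicator_iff measurableSet_ball]
    exact hInt
  have h1 : ∫ z, f z = ∫ z in Metric.ball (0:ℂ) 1, ((r : ℂ) - z)⁻¹ := by
    rw [hf, MeasureTheory.integral_indicator measurableSet_ball]
  have hpullint : IntegrableOn (fun p : ℝ × ℝ => p.1 • f (Complex.polarCoord.symm p))
      polarCoord.target volume := (polar_integrable_iff f).mp hint
  rw [← h1, ← Complex.integral_comp_polarCoord_symm f]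
  have htarget : polarCoord.target = Set.Ioi (0:ℝ) ×ˢ Set.Ioo (-π) π := rfl
  rw [htarget] at hpullint ⊢
  rw [Measure.volume_eq_prod ℝ ℝ] at hpullint ⊢
  rw [MeasureTheory.setIntegral_prod _ hpullint]
  set c0 : ℂ := 2 * (π : ℂ) / r with hc0
  set φ : ℝ → ℂ := (Set.Ioo (0:ℝ) r).indicator (fun ρ => ρ • c0) with hφ
  have h0 : ∀ᵐ ρ : ℝ ∂volume, ρ ≠ r ∧ ρ ≠ 1 := by
    have : volume ({r, 1} : Set ℝ) = 0 := by
      apply measure_union_null <;> exact Real.volume_singleton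
    rw [MeasureTheory.ae_iff]
    convert this using 2
    ext ρ
    simp [not_and_or, or_comm]
    tauto
  have hae : ∀ᵐ ρ : ℝ ∂(volume.restrict (Set.Ioi (0:ℝ))),
      (∫ θ in Set.Ioo (-π) π, ρ • f (Complex.polarCoord.symm (ρ, θ))) = φ ρ := by
    filter_upwards [ae_restrict_mem measurableSet_Ioi, ae_restrict_of_ae h0] with ρ hρ hne
    have hρ0 : (0:ℝ) < ρ := hρ
    have habs : ∀ θ : ℝ, ‖Complex.polarCoord.symm (ρ, θ)‖ = ρ := fun θ => by
      rw [Complex.norm_polarCoord_symm]; exact abs_of_pos hρ0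
    rcases lt_or_gt_of_ne hne.2 with h1 | h1
    · -- ρ < 1
      have hfg : ∀ θ : ℝ, f (Complex.polarCoord.symm (ρ, θ)) =
          ((r : ℂ) - Complex.polarCoord.symm (ρ, θ))⁻¹ := fun θ => by
        rw [hf, Set.indicator_of_mem]
        rw [Metric.mem_ball, Complex.dist_eq, sub_zero, habs]
        exact h1
      simp_rw [hfg]
      rw [MeasureTheory.integral_smul, circle_avg hr0 hρ0 hne.1]
      by_cases h2 : ρ < r
      · rw [if_pos h2, hφ, Set.indicator_of_mem (Set.mem_Ioo.mpr ⟨hρ0, h2⟩)]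
      · rw [if_neg h2, smul_zero, hφ, Set.indicator_of_notMem (fun hmem => h2 hmem.2)]
    · -- 1 < ρ
      have hfg : ∀ θ : ℝ, f (Complex.polarCoord.symm (ρ, θ)) = 0 := fun θ => by
        rw [hf, Set.indicator_of_notMem]
        rw [Metric.mem_ball, Complex.dist_eq, sub_zero, habs]
        exact not_lt.mpr h1.le
      simp_rw [hfg, smul_zero]
      rw [MeasureTheory.integral_zero]
      rw [hφ, Set.indicator_of_notMem (fun hmem => absurd hmem.2 (by linarith))]
  rw [MeasureTheory.integral_congr_ae hae, hφ,
    MeasureTheory.setIntegral_indicator measurableSet_Ioo,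
    Set.inter_eq_self_of_subset_right (Set.Ioo_subset_Ioi_self),
    integral_smul_const, ← MeasureTheory.integral_Ioc_eq_integral_Ioo,
    ← intervalIntegral.integral_of_le hr0.le, integral_id]
  rw [hc0, Complex.real_smul]
  push_cast
  field_simp
  ring

/-- The uniform probability measure on the open unit disc in `ℂ`. -/
noncomputable def unifDisc : Measure ℂ :=
  (volume (Metric.ball (0 : ℂ) 1))⁻¹ • volume.restrict (Metric.ball (0 : ℂ) 1)

lemma volB : volume (Metric.ball (0 : ℂ) 1) = (NNReal.pi : ENNReal) := by
  rw [Complex.volume_ball]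
  simp

lemma cB_ne_top : (volume (Metric.ball (0 : ℂ) 1))⁻¹ ≠ ⊤ := by
  rw [volB]
  simp [Real.pi_ne_zero, NNReal.pi]
  exact fun h => Real.pi_ne_zero (congrArg NNReal.toReal (ENNReal.coe_eq_zero.mp h))

lemma cB_toReal : ((volume (Metric.ball (0 : ℂ) 1))⁻¹).toReal = π⁻¹ := by
  rw [volB, ENNReal.toReal_inv]
  rw [ENNReal.coe_toReal, NNReal.coe_real_pi]

lemma part1 (r : ℝ) (hr0 : 0 < r) (hr1 : r < 1) :
    Integrable (fun z : ℂ => r - (((r : ℂ) - z)⁻¹).re) unifDisc ∧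
      ∫ z, (r - (((r : ℂ) - z)⁻¹).re) ∂unifDisc = 0 := by
  obtain ⟨hg, hval⟩ := disc_integral r hr0 hr1
  have hBfin : volume (Metric.ball (0 : ℂ) 1) < ⊤ := by rw [volB]; simp
  have hIre : IntegrableOn (fun z : ℂ => (((r : ℂ) - z)⁻¹).re) (Metric.ball 0 1) volume := by
    have := hg.re
    simpa [IntegrableOn] using this
  have hIY : IntegrableOn (fun z : ℂ => r - (((r : ℂ) - z)⁻¹).re) (Metric.ball 0 1) volume :=
    (integrableOn_const (C := r) hBfin.ne).sub hIre
  have hIYμ : Integrable (fun z : ℂ => r - (((r : ℂ) - z)⁻¹).re) unifDisc := by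
    rw [unifDisc]
    exact hIY.smul_measure cB_ne_top
  refine ⟨hIYμ, ?_⟩
  rw [unifDisc, integral_smul_measure]
  have hre : ∫ z in Metric.ball (0:ℂ) 1, (((r : ℂ) - z)⁻¹).re =
      ((π : ℝ) * r) := by
    have := integral_re hg
    rw [hval] at this
    simp only [RCLike.re_eq_complex_re] at this
    rw [this]
    rw [show ((π : ℂ) * r) = ((π * r : ℝ) : ℂ) by push_cast; ring, Complex.ofReal_re]
  rw [integral_sub (integrableOn_const (C := r) hBfin.ne) hIre, hre, setIntegral_const]
  rw [show volume.real (Metric.ball (0:ℂ) 1) = π by rw [measureReal_def, volB, ENNReal.coe_toReal, NNReal.coe_real_pi]]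
  simp [mul_comm]

/-- For `X` uniform on the unit disc, `r ∈ (0,1)` and `Y = r - Re(1/(r - X))`: `Y` is
integrable with mean zero, and there is an absolute constant `C₁` such that for all `m ≥ 2`,
`|E[Y 1_{|Y| ≤ m}]| ≤ C₁/m`. -/
theorem truncated_first_moment_of_Y :
    (∀ r : ℝ, 0 < r → r < 1 →
        Integrable (fun z : ℂ => r - (((r : ℂ) - z)⁻¹).re) unifDisc ∧
        ∫ z, (r - (((r : ℂ) - z)⁻¹).re) ∂unifDisc = 0) ∧
    ∃ C₁ : ℝ, ∀ r : ℝ, 0 < r → r < 1 → ∀ m : ℝ, 2 ≤ m →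
      |∫ z in {z : ℂ | |r - (((r : ℂ) - z)⁻¹).re| ≤ m},
          (r - (((r : ℂ) - z)⁻¹).re) ∂unifDisc| ≤ C₁ / m := by
  refine ⟨fun r hr0 hr1 => part1 r hr0 hr1, 6, fun r hr0 hr1 m hm => ?_⟩
  obtain ⟨hIYμ, hmean⟩ := part1 r hr0 hr1
  set Y : ℂ → ℝ := fun z => r - (((r : ℂ) - z)⁻¹).re with hY
  have hm0 : (0:ℝ) < m := by linarith
  set S : Set ℂ := {z : ℂ | |Y z| ≤ m} with hSdef
  have hmeasY : Measurable Y := by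
    apply measurable_const.sub
    exact Complex.measurable_re.comp (measurable_const.sub measurable_id).inv
  have hS : MeasurableSet S := measurableSet_le hmeasY.abs measurable_const
  -- reduce to the complement
  have hsplit : ∫ z in S, Y z ∂unifDisc + ∫ z in Sᶜ, Y z ∂unifDisc = 0 := by
    rw [integral_add_compl hS hIYμ, hmean]
  have habs : |∫ z in S, Y z ∂unifDisc| = |∫ z in Sᶜ, Y z ∂unifDisc| := by
    rw [show ∫ z in S, Y z ∂unifDisc = -∫ z in Sᶜ, Y z ∂unifDisc by linarith, abs_neg]
  rw [habs]
  -- pass to |Y| and Lebesgue measure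
  have h1 : |∫ z in Sᶜ, Y z ∂unifDisc| ≤ ∫ z in Sᶜ, |Y z| ∂unifDisc := by
    have := norm_integral_le_integral_norm (μ := unifDisc.restrict Sᶜ) Y
    simpa [Real.norm_eq_abs] using this
  have h2 : ∫ z in Sᶜ, |Y z| ∂unifDisc =
      π⁻¹ * ∫ z in Sᶜ ∩ Metric.ball (0:ℂ) 1, |Y z| ∂volume := by
    rw [unifDisc, Measure.restrict_smul, integral_smul_measure, cB_toReal,
      Measure.restrict_restrict hS.compl]
    simp [smul_eq_mul]
  -- pointwise bound and inclusion into a small ball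
  have hbound : ∀ z : ℂ, |Y z| ≤ 1 + ‖z - (r:ℂ)‖⁻¹ := by
    intro z
    have h3 : |(((r : ℂ) - z)⁻¹).re| ≤ ‖((r : ℂ) - z)⁻¹‖ := Complex.abs_re_le_norm _
    have h4 : ‖((r : ℂ) - z)⁻¹‖ = ‖z - (r:ℂ)‖⁻¹ := by rw [norm_inv, norm_sub_rev]
    calc |Y z| ≤ |r| + |(((r : ℂ) - z)⁻¹).re| := abs_sub _ _
    _ ≤ 1 + ‖z - (r:ℂ)‖⁻¹ := by
        rw [abs_of_pos hr0] at *
        exact add_le_add hr1.le (h4 ▸ h3)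
  have h2m : (0:ℝ) < 2 / m := by positivity
  have hsub2 : Sᶜ ∩ Metric.ball (0:ℂ) 1 ⊆ Metric.ball (r:ℂ) (2/m) := by
    rintro z ⟨hz1, -⟩
    rw [Set.mem_compl_iff, hSdef, Set.mem_setOf_eq, not_le] at hz1
    rw [Metric.mem_ball, Complex.dist_eq]
    by_contra hge
    push_neg at hge
    have hpos : (0:ℝ) < ‖z - (r:ℂ)‖ := lt_of_lt_of_le h2m hge
    have : ‖z - (r:ℂ)‖⁻¹ ≤ m / 2 := by
      rw [show m / 2 = (2/m)⁻¹ by field_simp]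
      exact inv_anti₀ h2m hge
    have := hbound z
    have hm2 : m / 2 + 1 ≤ m := by linarith
    linarith [hz1]
  obtain ⟨hD_int, hD_val⟩ := inv_norm_ball (r:ℂ) (2/m) h2m
  have hDfin : volume (Metric.ball ((r:ℂ)) (2/m)) < ⊤ := by
    rw [Complex.volume_ball]
    exact ENNReal.mul_lt_top (ENNReal.pow_lt_top ENNReal.ofReal_lt_top) ENNReal.coe_lt_top
  have hIb : IntegrableOn (fun z : ℂ => 1 + ‖z - (r:ℂ)‖⁻¹) (Metric.ball (r:ℂ) (2/m)) volume :=
    (integrableOn_const (C := (1:ℝ)) hDfin.ne).add hD_int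
  have hIY : IntegrableOn Y (Metric.ball (0:ℂ) 1) volume := by
    rw [unifDisc] at hIYμ
    exact (integrable_smul_measure (by rw [volB]; simp) cB_ne_top).mp hIYμ
  have hchain : ∫ z in Sᶜ ∩ Metric.ball (0:ℂ) 1, |Y z| ∂volume ≤
      ∫ z in Metric.ball (r:ℂ) (2/m), (1 + ‖z - (r:ℂ)‖⁻¹) ∂volume := by
    have hstep1 : ∫ z in Sᶜ ∩ Metric.ball (0:ℂ) 1, |Y z| ∂volume ≤
        ∫ z in Sᶜ ∩ Metric.ball (0:ℂ) 1, (1 + ‖z - (r:ℂ)‖⁻¹) ∂volume :=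
      setIntegral_mono_on ((hIY.mono_set Set.inter_subset_right).abs)
        (hIb.mono_set hsub2) (hS.compl.inter measurableSet_ball) (fun z _ => hbound z)
    refine hstep1.trans ?_
    refine setIntegral_mono_set hIb ?_ (HasSubset.Subset.eventuallyLE hsub2)
    exact Filter.Eventually.of_forall fun z => by positivity
  have hvolD : volume.real (Metric.ball ((r:ℂ)) (2/m)) = (2/m)^2 * π := by
    rw [measureReal_def, Complex.volume_ball, ENNReal.toReal_mul, ENNReal.toReal_pow,
      ENNReal.toReal_ofReal h2m.le]
    simp [NNReal.pi]
    exact Or.inl (ENNReal.coe_toReal _)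
  have hDval : ∫ z in Metric.ball (r:ℂ) (2/m), (1 + ‖z - (r:ℂ)‖⁻¹) ∂volume =
      (2/m)^2 * π + 2 * π * (2/m) := by
    rw [MeasureTheory.integral_add (integrableOn_const (C := (1:ℝ)) hDfin.ne) hD_int,
      setIntegral_const, hD_val, hvolD]
    simp
  have hfinal : π⁻¹ * ((2/m)^2 * π + 2 * π * (2/m)) ≤ 6 / m := by
    have hπ := Real.pi_pos
    have heq : π⁻¹ * ((2/m)^2 * π + 2 * π * (2/m)) = 4/m^2 + 4/m := by
      field_simp
      ring
    rw [heq]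
    have h4 : 4/m^2 ≤ 2/m := by
      rw [div_le_div_iff₀ (by positivity) hm0]
      nlinarith
    have h6 : (4:ℝ)/m + 2/m = 6/m := by
      rw [← add_div]
      norm_num
    linarith
  calc |∫ z in Sᶜ, Y z ∂unifDisc| ≤ ∫ z in Sᶜ, |Y z| ∂unifDisc := h1
    _ = π⁻¹ * ∫ z in Sᶜ ∩ Metric.ball (0:ℂ) 1, |Y z| ∂volume := h2
    _ ≤ π⁻¹ * ∫ z in Metric.ball (r:ℂ) (2/m), (1 + ‖z - (r:ℂ)‖⁻¹) ∂volume :=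
        mul_le_mul_of_nonneg_left hchain (inv_nonneg.mpr Real.pi_pos.le)
    _ = π⁻¹ * ((2/m)^2 * π + 2 * π * (2/m)) := by rw [hDval]
    _ ≤ 6 / m := hfinal
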